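/- arXiv:2411.19705 — 4 statements merged into one kernel-verified Lean document; each statement's English description precedes it below -/
import Mathlib

section
/- (Theorem, discrete measure, conjugate pair, constancy.) Under the stated discrete paraorthogonality setup with a conjugate pair of zeros, if W̃_j(t) = 0 for all t ∈ I and all j = 0,…,N, then φ_n′(t) = 0 for all t ∈ I; that is, the zero ζ(t) = e^{iφ_n(t)} does not move as t increases on I. -/
lemma exp_real_mul_I (x : ℝ) :
    Complex.exp (x * Complex.I) = (Real.cos x : ℂ) + (Real.sin x : ℂ) * Complex.I := by
  rw [Complex.exp_mul_I]
  simp [← Complex.ofReal_cos, ← Complex.ofReal_sin]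

lemma exp_real_mul_I' (x : ℝ) :
    Complex.exp (-x * Complex.I) = (Real.cos x : ℂ) - (Real.sin x : ℂ) * Complex.I := by
  rw [show (-(x:ℂ) * Complex.I) = ((-x : ℝ) : ℂ) * Complex.I by push_cast; ring,
    exp_real_mul_I]
  simp
  ring

lemma conj_exp_mul_I (θ : ℝ) :
    (starRingEnd ℂ) (Complex.exp (θ * Complex.I)) = Complex.exp (-θ * Complex.I) := by
  rw [← Complex.exp_conj]
  congr 1
  simp [Complex.conj_I]

lemma exp_sub_mul_conj (θ ψ : ℝ) :
    (Complex.exp (θ * Complex.I) - Complex.exp (ψ * Complex.I)) *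
      (starRingEnd ℂ) (Complex.exp (θ * Complex.I) - Complex.exp (ψ * Complex.I)) =
      ((2 - 2 * Real.cos (θ - ψ) : ℝ) : ℂ) := by
  rw [map_sub, conj_exp_mul_I, conj_exp_mul_I, exp_real_mul_I, exp_real_mul_I,
    exp_real_mul_I', exp_real_mul_I']
  simp [Complex.ext_iff, Real.cos_sub, Real.sin_sub, Complex.cos_ofReal_re,
    Complex.sin_ofReal_re]
  constructor <;> nlinarith [Real.sin_sq_add_cos_sq θ, Real.sin_sq_add_cos_sq ψ]

lemma pair_mul_conj (θ c : ℝ) :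
    (Complex.exp (θ * Complex.I) - Complex.exp (c * Complex.I)) *
      ((Complex.exp (θ * Complex.I) - Complex.exp (-c * Complex.I)) *
      (starRingEnd ℂ) (Complex.exp (θ * Complex.I))) =
      ((2 * (Real.cos θ - Real.cos c) : ℝ) : ℂ) := by
  rw [conj_exp_mul_I, exp_real_mul_I, exp_real_mul_I, exp_real_mul_I', exp_real_mul_I']
  simp [Complex.ext_iff, Complex.cos_ofReal_re, Complex.sin_ofReal_re]
  constructor
  · linear_combination (Real.cos θ - 2 * Real.cos c) * Real.sin_sq_add_cos_sq θ +
      Real.cos θ * Real.sin_sq_add_cos_sq c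
  · linear_combination Real.sin θ * Real.sin_sq_add_cos_sq θ -
      Real.sin θ * Real.sin_sq_add_cos_sq c

lemma re_twist (θ ψ : ℝ) :
    ((-2 * Complex.I * Complex.exp (-ψ * Complex.I)) *
      (Complex.exp (θ * Complex.I) - Complex.exp (ψ * Complex.I))).re
      = 2 * Real.sin (θ - ψ) := by
  rw [exp_real_mul_I, exp_real_mul_I, exp_real_mul_I']
  simp [Real.sin_sub, Complex.cos_ofReal_re, Complex.sin_ofReal_re]
  ring

lemma exp_eq_of_shift (x : ℝ) (k : ℤ) :
    Complex.exp ((x + k * (2 * Real.pi) : ℝ) * Complex.I) = Complex.exp (x * Complex.I) := by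
  push_cast
  rw [show ((x:ℂ) + k * (2 * Real.pi)) * Complex.I
      = x * Complex.I + k * (2 * Real.pi * Complex.I) by ring,
    Complex.exp_add, Complex.exp_int_mul_two_pi_mul_I, mul_one]

lemma cos_lt_one_of_exp_ne {θ ψ : ℝ}
    (h : Complex.exp (θ * Complex.I) ≠ Complex.exp (ψ * Complex.I)) :
    Real.cos (θ - ψ) < 1 := by
  rcases lt_or_eq_of_le (Real.cos_le_one (θ - ψ)) with h1 | h1
  · exact h1
  exfalso
  obtain ⟨m, hm⟩ := (Real.cos_eq_one_iff _).1 h1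
  exact h (by rw [show θ = ψ + m * (2 * Real.pi) by linarith, exp_eq_of_shift])

lemma sin_half_ne_zero {x : ℝ} (h : Real.cos x < 1) : Real.sin (x / 2) ≠ 0 := by
  intro hs
  obtain ⟨m, hm⟩ := Real.sin_eq_zero_iff.1 hs
  have hx : x = m * (2 * Real.pi) := by linarith
  rw [hx] at h
  rw [show (m : ℝ) * (2 * Real.pi) = m * (2 * Real.pi) by ring] at h
  have := Real.cos_int_mul_two_pi m
  linarith

lemma cos_ne_cos {θ c : ℝ}
    (h1 : Complex.exp (θ * Complex.I) ≠ Complex.exp (c * Complex.I))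
    (h2 : Complex.exp (θ * Complex.I) ≠ Complex.exp ((-c : ℝ) * Complex.I)) :
    Real.cos θ ≠ Real.cos c := by
  intro hc
  obtain ⟨k, hk | hk⟩ := Real.cos_eq_cos_iff.1 hc
  · apply h1
    rw [show θ = c + ((-k : ℤ) : ℝ) * (2 * Real.pi) by push_cast; linarith]
    exact exp_eq_of_shift c (-k)
  · apply h2
    rw [show θ = -c + ((k : ℤ) : ℝ) * (2 * Real.pi) by push_cast; linarith]
    exact exp_eq_of_shift (-c) k

lemma two_sub_two_cos_mul_cot (x : ℝ) (hs : Real.sin (x / 2) ≠ 0) :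
    (2 - 2 * Real.cos x) * Real.cot (x / 2) = 2 * Real.sin x := by
  rw [Real.cot_eq_cos_div_sin]
  have h1 : Real.cos x = 1 - 2 * Real.sin (x / 2) ^ 2 := by
    have h := Real.cos_two_mul (x / 2)
    have h2 := Real.sin_sq_add_cos_sq (x / 2)
    rw [show 2 * (x / 2) = x by ring] at h
    linarith
  have h2 : Real.sin x = 2 * Real.sin (x / 2) * Real.cos (x / 2) := by
    have h := Real.sin_two_mul (x / 2)
    rw [show 2 * (x / 2) = x by ring] at h
    linarith
  field_simp
  rw [h1, h2]
  ring


open Polynomial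

/-- Theorem (discrete measure, conjugate pair, constancy): under the discrete
paraorthogonality setup with a conjugate pair of zeros `e^{±iφ_n(t)}`, if
`W̃_j(t) = 0` for all `t ∈ I` and all `j`, then `φ_n'(t) = 0` for all `t ∈ I`,
i.e. the zero `ζ(t) = e^{iφ_n(t)}` does not move as `t` increases on `I`. -/
theorem discrete_popuc_conjugate_pair_zero_does_not_move
    -- the open interval `I = (a, b)`
    (a b : ℝ) (hab : a < b)
    -- the masses `γ_j` and mass points `ω_j`, `j = 0, …, N`
    (N : ℕ) (γ ω : ℕ → ℝ → ℝ)
    (hγpos : ∀ j ≤ N, ∀ t ∈ Set.Ioo a b, 0 < γ j t)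
    (hγdiff : ∀ j ≤ N, ∀ t ∈ Set.Ioo a b, DifferentiableAt ℝ (γ j) t)
    (hωdiff : ∀ j ≤ N, ∀ t ∈ Set.Ioo a b, DifferentiableAt ℝ (ω j) t)
    -- the zeros `e^{iφ_k(t)}`, `k = 1, …, n`, of the POPUC `P(·; t)`, with the
    -- conjugate pair `e^{±iφ_n(t)}`
    (n : ℕ) (hn : 2 ≤ n) (φ : ℕ → ℝ → ℝ)
    (hφdiff : ∀ k ∈ Finset.Icc 1 n, ∀ t ∈ Set.Ioo a b, DifferentiableAt ℝ (φ k) t)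
    (hconj : ∀ t ∈ Set.Ioo a b, φ (n - 1) t = -φ n t)
    (hrange : ∀ t ∈ Set.Ioo a b, φ n t ∈ Set.Ioo 0 Real.pi)
    (P : ℂ → ℝ → ℂ)
    (hP : ∀ z t, P z t = ∏ k ∈ Finset.Icc 1 n, (z - Complex.exp (φ k t * Complex.I)))
    (hdistinct : ∀ t ∈ Set.Ioo a b, ∀ j ∈ Finset.Icc 1 n, ∀ k ∈ Finset.Icc 1 n, j ≠ k →
      Complex.exp (φ j t * Complex.I) ≠ Complex.exp (φ k t * Complex.I))
    (hsep : ∀ t ∈ Set.Ioo a b, ∀ j ≤ N, ∀ k ∈ Finset.Icc 1 n,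
      Complex.exp (ω j t * Complex.I) ≠ Complex.exp (φ k t * Complex.I))
    -- paraorthogonality with respect to the measure `Σ_j γ_j(t) δ(θ − ω_j(t))`
    (hpara : ∀ t ∈ Set.Ioo a b, ∀ g : Polynomial ℂ,
      g.natDegree ≤ n - 1 → g.eval 0 = 0 →
      ∑ j ∈ Finset.range (N + 1), (γ j t : ℂ) *
        P (Complex.exp (ω j t * Complex.I)) t *
        (starRingEnd ℂ) (g.eval (Complex.exp (ω j t * Complex.I))) = 0)
    -- the functions `s̃`, `S̃` and `W̃_j`
    (s' : ℝ → ℝ → ℝ)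
    (hs' : ∀ θ t, s' θ t = 1 / (2 * (Real.cos (φ n t) - Real.cos θ)))
    (S' : ℝ → ℝ → ℝ)
    (hS' : ∀ θ t, S' θ t = Real.sin θ / (Real.cos θ - Real.cos (φ n t)) +
      ∑ k ∈ Finset.Icc 1 (n - 2), Real.cot ((φ k t - θ) / 2))
    (W' : ℕ → ℝ → ℝ)
    (hW' : ∀ j t, W' j t = s' (ω j t) t * deriv (γ j) t -
      γ j t * s' (ω j t) t * S' (ω j t) t * deriv (ω j) t)
    -- hypothesis: all the `W̃_j` vanish identically on `I`
    (hWzero : ∀ t ∈ Set.Ioo a b, ∀ j ≤ N, W' j t = 0)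
    -- conclusion
    : ∀ t ∈ Set.Ioo a b, deriv (φ n) t = 0 := by
  intro t htI
  classical
  set K : Finset ℕ := Finset.Icc 1 (n - 2) with hK
  have hKsub : ∀ k ∈ K, k ∈ Finset.Icc 1 n := by
    intro k hk; simp only [hK, Finset.mem_Icc] at *; omega
  have hnmem : n ∈ Finset.Icc 1 n := by simp only [Finset.mem_Icc]; omega
  have hn1mem : n - 1 ∈ Finset.Icc 1 n := by simp only [Finset.mem_Icc]; omega
  have hsplit : Finset.Icc 1 n = insert n (insert (n - 1) K) := by
    ext x; simp only [hK, Finset.mem_Icc, Finset.mem_insert]; omega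
  have hnotin1 : n ∉ insert (n - 1) K := by
    simp only [hK, Finset.mem_insert, Finset.mem_Icc]; omega
  have hnotin2 : n - 1 ∉ K := by simp only [hK, Finset.mem_Icc]; omega
  -- the key consequence of paraorthogonality
  have key : ∀ s ∈ Set.Ioo a b, ∀ K' ⊆ K,
      ∑ j ∈ Finset.range (N + 1),
        ((γ j s * (2 * (Real.cos (ω j s) - Real.cos (φ n s))) *
            ∏ k ∈ K', (2 - 2 * Real.cos (ω j s - φ k s)) : ℝ) : ℂ) *
          ∏ k ∈ K \ K', (Complex.exp (ω j s * Complex.I) - Complex.exp (φ k s * Complex.I))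
        = 0 := by
    intro s hs K' hK'
    set g : Polynomial ℂ :=
      Polynomial.X * ∏ k ∈ K', (Polynomial.X - Polynomial.C (Complex.exp (φ k s * Complex.I)))
      with hg
    have hne : ∀ k ∈ K', (Polynomial.X - Polynomial.C (Complex.exp (φ k s * Complex.I))) ≠ (0 : Polynomial ℂ) :=
      fun k _ => Polynomial.X_sub_C_ne_zero _
    have hprodne : (∏ k ∈ K', (Polynomial.X - Polynomial.C (Complex.exp (φ k s * Complex.I)))) ≠ 0 :=
      Finset.prod_ne_zero_iff.2 hne
    have hcard : K'.card ≤ n - 2 := by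
      have := Finset.card_le_card hK'
      simpa [hK, Nat.card_Icc] using this
    have hdeg : g.natDegree ≤ n - 1 := by
      rw [hg, Polynomial.natDegree_mul Polynomial.X_ne_zero hprodne, Polynomial.natDegree_X,
        Polynomial.natDegree_prod _ _ hne]
      simp only [Polynomial.natDegree_X_sub_C, Finset.sum_const, smul_eq_mul, mul_one]
      omega
    have heval0 : g.eval 0 = 0 := by simp [hg]
    have h0 := hpara s hs g hdeg heval0
    have hterm : ∀ j ∈ Finset.range (N + 1),
        ((γ j s * (2 * (Real.cos (ω j s) - Real.cos (φ n s))) *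
            ∏ k ∈ K', (2 - 2 * Real.cos (ω j s - φ k s)) : ℝ) : ℂ) *
          ∏ k ∈ K \ K', (Complex.exp (ω j s * Complex.I) - Complex.exp (φ k s * Complex.I))
        = (γ j s : ℂ) * P (Complex.exp (ω j s * Complex.I)) s *
            (starRingEnd ℂ) (g.eval (Complex.exp (ω j s * Complex.I))) := by
      intro j hj
      rw [hg]
      simp only [Polynomial.eval_mul, Polynomial.eval_X, Polynomial.eval_prod,
        Polynomial.eval_sub, Polynomial.eval_C]
      rw [hP, hsplit, Finset.prod_insert hnotin1, Finset.prod_insert hnotin2,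
        ← Finset.prod_sdiff hK', map_mul (starRingEnd ℂ), map_prod, hconj s hs]
      have e1 := pair_mul_conj (ω j s) (φ n s)
      have e2 : (∏ k ∈ K', ((Complex.exp (ω j s * Complex.I) - Complex.exp (φ k s * Complex.I)) *
          (starRingEnd ℂ) (Complex.exp (ω j s * Complex.I) - Complex.exp (φ k s * Complex.I))))
          = ((∏ k ∈ K', (2 - 2 * Real.cos (ω j s - φ k s)) : ℝ) : ℂ) := by
        rw [Complex.ofReal_prod]
        exact Finset.prod_congr rfl fun k _ => exp_sub_mul_conj _ _
      calc ((γ j s * (2 * (Real.cos (ω j s) - Real.cos (φ n s))) *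
            ∏ k ∈ K', (2 - 2 * Real.cos (ω j s - φ k s)) : ℝ) : ℂ) *
          ∏ k ∈ K \ K', (Complex.exp (ω j s * Complex.I) - Complex.exp (φ k s * Complex.I))
          = (γ j s : ℂ) * ((2 * (Real.cos (ω j s) - Real.cos (φ n s)) : ℝ) : ℂ) *
            ((∏ k ∈ K', (2 - 2 * Real.cos (ω j s - φ k s)) : ℝ) : ℂ) *
            ∏ k ∈ K \ K', (Complex.exp (ω j s * Complex.I) - Complex.exp (φ k s * Complex.I)) := by
            push_cast; ring
        _ = _ := by
            rw [show Complex.exp ((-φ n s : ℝ) * Complex.I)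
                = Complex.exp (-(φ n s : ℝ) * Complex.I) by norm_cast]
            rw [← e1, ← e2, Finset.prod_mul_distrib]
            ring
    rw [Finset.sum_congr rfl hterm]
    exact h0
  -- Fact A : the real identity F ≡ 0 on (a,b)
  set F : ℝ → ℝ := fun s => ∑ j ∈ Finset.range (N + 1),
      (γ j s * (Real.cos (ω j s) - Real.cos (φ n s))) *
        ∏ k ∈ K, (2 - 2 * Real.cos (ω j s - φ k s)) with hF
  have hF0 : ∀ s ∈ Set.Ioo a b, F s = 0 := by
    intro s hs
    have h1 := key s hs K (le_refl K)
    rw [Finset.sdiff_self] at h1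
    simp only [Finset.prod_empty, mul_one] at h1
    rw [← Complex.ofReal_sum] at h1
    have h2 := Complex.ofReal_eq_zero.1 h1
    have h3 : ∑ j ∈ Finset.range (N + 1),
        γ j s * (2 * (Real.cos (ω j s) - Real.cos (φ n s))) *
          ∏ k ∈ K, (2 - 2 * Real.cos (ω j s - φ k s)) = 2 * F s := by
      rw [hF, Finset.mul_sum]
      exact Finset.sum_congr rfl fun j _ => by ring
    rw [h3] at h2
    linarith
  -- Fact B : for every k₀ ∈ K the twisted sums vanish at t
  have factB : ∀ k₀ ∈ K, ∑ j ∈ Finset.range (N + 1),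
      γ j t * ((Real.cos (ω j t) - Real.cos (φ n t)) *
        ((∏ l ∈ K.erase k₀, (2 - 2 * Real.cos (ω j t - φ l t))) *
          (2 * Real.sin (ω j t - φ k₀ t)))) = 0 := by
    intro k₀ hk₀
    have hsd : K \ K.erase k₀ = {k₀} := by
      have hk₀' := hk₀
      simp only [hK, Finset.mem_Icc] at hk₀'
      ext x
      simp only [Finset.mem_sdiff, Finset.mem_erase, Finset.mem_singleton, hK, Finset.mem_Icc]
      constructor
      · rintro ⟨hx, h⟩
        by_contra hne
        exact h ⟨hne, hx⟩
      · rintro rfl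
        exact ⟨hk₀', fun h => h.1 rfl⟩
    have h1 := key t htI (K.erase k₀) (Finset.erase_subset _ _)
    rw [hsd] at h1
    simp only [Finset.prod_singleton] at h1
    have h2 := congrArg (fun w : ℂ =>
      (w * (-2 * Complex.I * Complex.exp (-(φ k₀ t : ℝ) * Complex.I))).re) h1
    simp only [zero_mul, Complex.zero_re] at h2
    rw [Finset.sum_mul, Complex.re_sum] at h2
    have h3 : ∀ j ∈ Finset.range (N + 1),
        ((((γ j t * (2 * (Real.cos (ω j t) - Real.cos (φ n t))) *
            ∏ k ∈ K.erase k₀, (2 - 2 * Real.cos (ω j t - φ k t)) : ℝ) : ℂ) *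
          (Complex.exp (ω j t * Complex.I) - Complex.exp (φ k₀ t * Complex.I)) *
          (-2 * Complex.I * Complex.exp (-(φ k₀ t : ℝ) * Complex.I))).re)
        = (γ j t * (2 * (Real.cos (ω j t) - Real.cos (φ n t))) *
            ∏ k ∈ K.erase k₀, (2 - 2 * Real.cos (ω j t - φ k t))) *
          (2 * Real.sin (ω j t - φ k₀ t)) := by
      intro j hj
      rw [mul_assoc, mul_comm (Complex.exp (ω j t * Complex.I) - Complex.exp (φ k₀ t * Complex.I)),
        ← mul_assoc, mul_assoc, Complex.re_ofReal_mul, re_twist]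
    rw [Finset.sum_congr rfl h3] at h2
    have h4 : ∑ j ∈ Finset.range (N + 1),
        (γ j t * (2 * (Real.cos (ω j t) - Real.cos (φ n t))) *
          ∏ k ∈ K.erase k₀, (2 - 2 * Real.cos (ω j t - φ k t))) *
          (2 * Real.sin (ω j t - φ k₀ t))
        = 2 * ∑ j ∈ Finset.range (N + 1),
          γ j t * ((Real.cos (ω j t) - Real.cos (φ n t)) *
            ((∏ l ∈ K.erase k₀, (2 - 2 * Real.cos (ω j t - φ l t))) *
              (2 * Real.sin (ω j t - φ k₀ t)))) := by
      rw [Finset.mul_sum]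
      exact Finset.sum_congr rfl fun j _ => by ring
    rw [h4] at h2
    linarith
  -- derivatives
  have hjN : ∀ j ∈ Finset.range (N + 1), j ≤ N := fun j hj => Finset.mem_range_succ_iff.1 hj
  have hγd : ∀ j ∈ Finset.range (N + 1), HasDerivAt (γ j) (deriv (γ j) t) t :=
    fun j hj => (hγdiff j (hjN j hj) t htI).hasDerivAt
  have hωd : ∀ j ∈ Finset.range (N + 1), HasDerivAt (ω j) (deriv (ω j) t) t :=
    fun j hj => (hωdiff j (hjN j hj) t htI).hasDerivAt
  have hφd : ∀ k ∈ Finset.Icc 1 n, HasDerivAt (φ k) (deriv (φ k) t) t :=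
    fun k hk => (hφdiff k hk t htI).hasDerivAt
  -- derivative of the product factor
  set qd : ℕ → ℝ := fun j => ∑ k ∈ K,
      (∏ l ∈ K.erase k, (2 - 2 * Real.cos (ω j t - φ l t))) *
        (2 * Real.sin (ω j t - φ k t) * (deriv (ω j) t - deriv (φ k) t)) with hqd
  have hqd' : ∀ j ∈ Finset.range (N + 1),
      HasDerivAt (fun u => ∏ k ∈ K, (2 - 2 * Real.cos (ω j u - φ k u))) (qd j) t := by
    intro j hj
    have hfac : ∀ k ∈ K, HasDerivAt (fun u => 2 - 2 * Real.cos (ω j u - φ k u))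
        (0 - 2 * (-Real.sin (ω j t - φ k t) * (deriv (ω j) t - deriv (φ k) t))) t :=
      fun k hk => (hasDerivAt_const t (2:ℝ)).sub
        (HasDerivAt.const_mul 2 (((hωd j hj).sub (hφd k (hKsub k hk))).cos))
    have h := HasDerivAt.fun_finsetProd hfac
    have heq : qd j = ∑ k ∈ K, (∏ l ∈ K.erase k, (2 - 2 * Real.cos (ω j t - φ l t))) •
        (0 - 2 * (-Real.sin (ω j t - φ k t) * (deriv (ω j) t - deriv (φ k) t))) := by
      rw [hqd]
      exact Finset.sum_congr rfl fun k _ => by rw [smul_eq_mul]; ring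
    rw [heq]
    exact h
  set D : ℝ := ∑ j ∈ Finset.range (N + 1),
      ((deriv (γ j) t * (Real.cos (ω j t) - Real.cos (φ n t)) +
          γ j t * (-Real.sin (ω j t) * deriv (ω j) t - -Real.sin (φ n t) * deriv (φ n) t)) *
        (∏ k ∈ K, (2 - 2 * Real.cos (ω j t - φ k t))) +
        (γ j t * (Real.cos (ω j t) - Real.cos (φ n t))) * qd j) with hD
  have hFd : HasDerivAt F D t := by
    rw [hF, hD]
    exact HasDerivAt.fun_sum fun j hj =>
      ((hγd j hj).fun_mul (((hωd j hj).cos).fun_sub ((hφd n hnmem).cos))).fun_mul (hqd' j hj)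
  have hDzero : D = 0 := by
    have h1 : deriv F t = D := hFd.deriv
    have h2 : F =ᶠ[nhds t] (fun _ => (0:ℝ)) :=
      Filter.eventuallyEq_of_mem (isOpen_Ioo.mem_nhds htI) hF0
    rw [← h1, h2.deriv_eq, deriv_const]
  -- reduce each summand of D using the vanishing of W'
  have per_j : ∀ j ∈ Finset.range (N + 1),
      (deriv (γ j) t * (Real.cos (ω j t) - Real.cos (φ n t)) +
          γ j t * (-Real.sin (ω j t) * deriv (ω j) t - -Real.sin (φ n t) * deriv (φ n) t)) *
        (∏ k ∈ K, (2 - 2 * Real.cos (ω j t - φ k t))) +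
        (γ j t * (Real.cos (ω j t) - Real.cos (φ n t))) * qd j
      = γ j t * Real.sin (φ n t) * deriv (φ n) t *
          (∏ k ∈ K, (2 - 2 * Real.cos (ω j t - φ k t)))
        - γ j t * ((Real.cos (ω j t) - Real.cos (φ n t)) *
            (∑ k ∈ K, deriv (φ k) t *
              ((∏ l ∈ K.erase k, (2 - 2 * Real.cos (ω j t - φ l t))) *
                (2 * Real.sin (ω j t - φ k t))))) := by
    intro j hj
    have hjN' := hjN j hj
    have hune : Real.cos (ω j t) - Real.cos (φ n t) ≠ 0 := by
      have h1 := hsep t htI j hjN' n hnmem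
      have h2 := hsep t htI j hjN' (n - 1) hn1mem
      rw [hconj t htI] at h2
      exact sub_ne_zero.2 (cos_ne_cos h1 h2)
    have hqC : (∏ k ∈ K, (2 - 2 * Real.cos (ω j t - φ k t))) *
        (∑ k ∈ K, Real.cot ((φ k t - ω j t) / 2))
        = -∑ k ∈ K, (∏ l ∈ K.erase k, (2 - 2 * Real.cos (ω j t - φ l t))) *
            (2 * Real.sin (ω j t - φ k t)) := by
      rw [Finset.mul_sum, ← Finset.sum_neg_distrib]
      refine Finset.sum_congr rfl fun k hk => ?_
      rw [← Finset.prod_erase_mul K _ hk]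
      have hcoslt := cos_lt_one_of_exp_ne (hsep t htI j hjN' k (hKsub k hk))
      have hsh := sin_half_ne_zero hcoslt
      have hcot : Real.cot ((φ k t - ω j t) / 2) = -Real.cot ((ω j t - φ k t) / 2) := by
        rw [show (φ k t - ω j t) / 2 = -((ω j t - φ k t) / 2) by ring,
          Real.cot_eq_cos_div_sin, Real.cot_eq_cos_div_sin, Real.cos_neg, Real.sin_neg,
          div_neg]
      rw [hcot]
      have hT := two_sub_two_cos_mul_cot (ω j t - φ k t) hsh
      linear_combination (-(∏ l ∈ K.erase k, (2 - 2 * Real.cos (ω j t - φ l t)))) * hT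
    have hqdsplit : qd j = deriv (ω j) t *
        (∑ k ∈ K, (∏ l ∈ K.erase k, (2 - 2 * Real.cos (ω j t - φ l t))) *
          (2 * Real.sin (ω j t - φ k t)))
        - ∑ k ∈ K, deriv (φ k) t *
            ((∏ l ∈ K.erase k, (2 - 2 * Real.cos (ω j t - φ l t))) *
              (2 * Real.sin (ω j t - φ k t))) := by
      rw [hqd, Finset.mul_sum, ← Finset.sum_sub_distrib]
      exact Finset.sum_congr rfl fun k _ => by ring
    have hW := hWzero t htI j hjN'
    rw [hW' j t, hs' (ω j t) t, hS' (ω j t) t] at hW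
    have hrel : deriv (γ j) t * (Real.cos (ω j t) - Real.cos (φ n t)) =
        γ j t * (Real.sin (ω j t) + (Real.cos (ω j t) - Real.cos (φ n t)) *
          (∑ k ∈ K, Real.cot ((φ k t - ω j t) / 2))) * deriv (ω j) t := by
      have hune' : Real.cos (φ n t) - Real.cos (ω j t) ≠ 0 := fun h => hune (by linarith)
      field_simp at hW
      have h3 : (2 * (Real.cos (φ n t) - Real.cos (ω j t))) *
          (deriv (γ j) t * (Real.cos (ω j t) - Real.cos (φ n t)) -
            γ j t * (Real.sin (ω j t) + (Real.cos (ω j t) - Real.cos (φ n t)) *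
              (∑ k ∈ K, Real.cot ((φ k t - ω j t) / 2))) * deriv (ω j) t) = 0 := by
        linear_combination (2 * (Real.cos (φ n t) - Real.cos (ω j t))) * hW
      have h4 : (2 : ℝ) * (Real.cos (φ n t) - Real.cos (ω j t)) ≠ 0 := by
        intro h
        exact hune (by linarith)
      have h5 := (mul_eq_zero.1 h3).resolve_left h4
      linarith
    rw [hqdsplit]
    linear_combination (∏ k ∈ K, (2 - 2 * Real.cos (ω j t - φ k t))) * hrel +
      (γ j t * deriv (ω j) t * (Real.cos (ω j t) - Real.cos (φ n t))) * hqC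
  -- sum the reduced identity
  rw [hD, Finset.sum_congr rfl per_j, Finset.sum_sub_distrib] at hDzero
  have hBzero : ∑ j ∈ Finset.range (N + 1),
      γ j t * ((Real.cos (ω j t) - Real.cos (φ n t)) *
        (∑ k ∈ K, deriv (φ k) t *
          ((∏ l ∈ K.erase k, (2 - 2 * Real.cos (ω j t - φ l t))) *
            (2 * Real.sin (ω j t - φ k t))))) = 0 := by
    have h1 : ∀ j ∈ Finset.range (N + 1),
        γ j t * ((Real.cos (ω j t) - Real.cos (φ n t)) *
          (∑ k ∈ K, deriv (φ k) t *
            ((∏ l ∈ K.erase k, (2 - 2 * Real.cos (ω j t - φ l t))) *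
              (2 * Real.sin (ω j t - φ k t)))))
        = ∑ k ∈ K, deriv (φ k) t *
            (γ j t * ((Real.cos (ω j t) - Real.cos (φ n t)) *
              ((∏ l ∈ K.erase k, (2 - 2 * Real.cos (ω j t - φ l t))) *
                (2 * Real.sin (ω j t - φ k t))))) := by
      intro j _
      rw [Finset.mul_sum, Finset.mul_sum]
      exact Finset.sum_congr rfl fun k _ => by ring
    rw [Finset.sum_congr rfl h1, Finset.sum_comm]
    refine Finset.sum_eq_zero fun k hk => ?_
    rw [← Finset.mul_sum, factB k hk, mul_zero]
  rw [hBzero, sub_zero] at hDzero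
  have hfirst : ∑ j ∈ Finset.range (N + 1),
      γ j t * Real.sin (φ n t) * deriv (φ n) t *
        (∏ k ∈ K, (2 - 2 * Real.cos (ω j t - φ k t)))
      = Real.sin (φ n t) * deriv (φ n) t *
        ∑ j ∈ Finset.range (N + 1),
          γ j t * ∏ k ∈ K, (2 - 2 * Real.cos (ω j t - φ k t)) := by
    rw [Finset.mul_sum]
    exact Finset.sum_congr rfl fun j _ => by ring
  rw [hfirst] at hDzero
  have hpos : 0 < ∑ j ∈ Finset.range (N + 1),
      γ j t * ∏ k ∈ K, (2 - 2 * Real.cos (ω j t - φ k t)) := by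
    refine Finset.sum_pos (fun j hj => mul_pos (hγpos j (hjN j hj) t htI)
      (Finset.prod_pos fun k hk => ?_)) ⟨0, Finset.mem_range.2 (Nat.succ_pos N)⟩
    have := cos_lt_one_of_exp_ne (hsep t htI j (hjN j hj) k (hKsub k hk))
    linarith
  have hsinpos : 0 < Real.sin (φ n t) :=
    Real.sin_pos_of_pos_of_lt_pi (hrange t htI).1 (hrange t htI).2
  rcases mul_eq_zero.1 hDzero with h | h
  · rcases mul_eq_zero.1 h with h' | h'
    · linarith
    · exact h'
  · linarith
end

section
/- (Remark, part 1.) Under the stated time-independent-weight mixed paraorthogonality setup with fixed zero e^{iθ₀}, assume in addition that n > N+1, that P(e^{iω_j(t)};t) = 0 for every j = 0,…,N and every t ∈ I (every mass point is a zero of P), and that e^{iω_j(t)} ≠ e^{iφ_n(t)} for all j and t. Then φ_n′(t) = 0 for all t ∈ I; that is, the zero ζ(t) = e^{iφ_n(t)} does not move as t increases on I. -/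
open Polynomial

section MixedPopucAux
open MeasureTheory

lemma eval_bound (q : Polynomial ℂ) : ∃ C, 0 ≤ C ∧
    ∀ θ : ℝ, ‖q.eval (Complex.exp (θ * Complex.I))‖ ≤ C := by
  refine ⟨∑ i ∈ Finset.range (q.natDegree + 1), ‖q.coeff i‖,
    Finset.sum_nonneg fun i _ => norm_nonneg _, fun θ => ?_⟩
  rw [Polynomial.eval_eq_sum_range]
  refine le_trans (norm_sum_le _ _) (Finset.sum_le_sum fun i _ => ?_)
  rw [norm_mul, norm_pow]
  have h : ‖Complex.exp ((θ : ℂ) * Complex.I)‖ = 1 := by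
    simpa using Complex.norm_exp_ofReal_mul_I θ
  rw [h]; simp

lemma integrable_aux {θ₀ : ℝ} {μ : Measure ℝ} {w : ℝ → ℝ}
    (hwint : IntegrableOn w (Set.Ico θ₀ (θ₀ + 2 * Real.pi)) μ)
    (p g : Polynomial ℂ) :
    IntegrableOn (fun θ : ℝ => p.eval (Complex.exp (θ * Complex.I)) *
      (starRingEnd ℂ) (g.eval (Complex.exp (θ * Complex.I))) * (w θ : ℂ))
      (Set.Ico θ₀ (θ₀ + 2 * Real.pi)) μ := by
  have hc : Continuous (fun θ : ℝ => p.eval (Complex.exp (θ * Complex.I)) *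
      (starRingEnd ℂ) (g.eval (Complex.exp (θ * Complex.I)))) := by
    have h1 : Continuous (fun θ : ℝ => p.eval (Complex.exp (θ * Complex.I))) := by fun_prop
    have h2 : Continuous (fun θ : ℝ => g.eval (Complex.exp (θ * Complex.I))) := by fun_prop
    exact h1.mul (RCLike.continuous_conj.comp h2)
  obtain ⟨C1, hC1n, hC1⟩ := eval_bound p
  obtain ⟨C2, hC2n, hC2⟩ := eval_bound g
  have hb : ∃ C, ∀ θ : ℝ, ‖p.eval (Complex.exp (θ * Complex.I)) *
      (starRingEnd ℂ) (g.eval (Complex.exp (θ * Complex.I)))‖ ≤ C := by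
    refine ⟨C1 * C2, fun θ => ?_⟩
    rw [norm_mul]
    have hcj : ‖(starRingEnd ℂ) (g.eval (Complex.exp (θ * Complex.I)))‖ =
        ‖g.eval (Complex.exp (θ * Complex.I))‖ := norm_star _
    rw [hcj]
    exact mul_le_mul (hC1 θ) (hC2 θ) (norm_nonneg _) hC1n
  exact hwint.ofReal.bdd_mul hc.aestronglyMeasurable (Filter.Eventually.of_forall hb.choose_spec)

lemma exp_injOn (θ₀ : ℝ) : Set.InjOn (fun θ : ℝ => Complex.exp (θ * Complex.I))
    (Set.Ico θ₀ (θ₀ + 2 * Real.pi)) := by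
  intro x hx y hy hxy
  simp only [Complex.exp_eq_exp_iff_exists_int] at hxy
  obtain ⟨m, hm⟩ := hxy
  have h2 : (x : ℂ) * Complex.I = (((y : ℝ) + m * (2 * Real.pi)) : ℂ) * Complex.I := by
    rw [hm]; push_cast; ring
  have h3 : (x : ℂ) = (((y : ℝ) + m * (2 * Real.pi)) : ℂ) :=
    mul_right_cancel₀ Complex.I_ne_zero h2
  have h4 : x = y + m * (2 * Real.pi) := by exact_mod_cast h3
  have hπ := Real.pi_pos
  obtain ⟨hx1, hx2⟩ := hx; obtain ⟨hy1, hy2⟩ := hy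
  have hm0 : m = 0 := by
    rcases lt_trichotomy m 0 with h | h | h
    · have : (m : ℝ) ≤ -1 := by exact_mod_cast Int.le_sub_one_of_lt h
      nlinarith
    · exact h
    · have : (1 : ℝ) ≤ m := by exact_mod_cast h
      nlinarith
  rw [hm0] at h4; simpa using h4

lemma cos_lt_one_aux {θ₀ θ : ℝ} (h1 : θ₀ < θ) (h2 : θ < θ₀ + 2 * Real.pi) :
    Real.cos (θ₀ - θ) < 1 := by
  have hle := Real.cos_le_one (θ₀ - θ)
  rcases eq_or_lt_of_le hle with heq | hlt
  · exfalso
    rw [Real.cos_eq_one_iff_of_lt_of_lt (by linarith) (by linarith)] at heq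
    linarith
  · exact hlt

lemma pointwise_re (θ₀ θ : ℝ) (S : Polynomial ℂ) :
    ((Complex.exp ((θ:ℝ) * Complex.I) - Complex.exp ((θ₀:ℝ) * Complex.I)) *
        S.eval (Complex.exp ((θ:ℝ) * Complex.I)) *
        (starRingEnd ℂ) ((Polynomial.X * S).eval (Complex.exp ((θ:ℝ) * Complex.I)))) =
      (1 - Complex.exp (((θ₀ - θ : ℝ) : ℂ) * Complex.I)) *
        (Complex.normSq (S.eval (Complex.exp ((θ:ℝ) * Complex.I))) : ℂ) := by
  set z := Complex.exp ((θ:ℝ) * Complex.I) with hz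
  set v := S.eval z with hv
  have h1 : (starRingEnd ℂ) z = Complex.exp ((-θ : ℝ) * Complex.I) := by
    rw [hz, ← Complex.exp_conj]
    congr 1
    simp [Complex.conj_ofReal]
  have h2 : z * Complex.exp (((-θ : ℝ) : ℂ) * Complex.I) = 1 := by
    rw [hz, ← Complex.exp_add, ← Complex.exp_zero]
    congr 1
    push_cast
    ring
  have h3 : Complex.exp ((θ₀:ℝ) * Complex.I) * Complex.exp (((-θ : ℝ) : ℂ) * Complex.I) =
      Complex.exp (((θ₀ - θ : ℝ) : ℂ) * Complex.I) := by
    rw [← Complex.exp_add]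
    congr 1
    push_cast
    ring
  have h4 : v * (starRingEnd ℂ) v = (Complex.normSq v : ℂ) := Complex.mul_conj v
  calc (z - Complex.exp ((θ₀:ℝ) * Complex.I)) * v * (starRingEnd ℂ) ((Polynomial.X * S).eval z)
      = (z - Complex.exp ((θ₀:ℝ) * Complex.I)) * (starRingEnd ℂ) z * (v * (starRingEnd ℂ) v) := by
        rw [Polynomial.eval_mul, Polynomial.eval_X, map_mul]; ring
    _ = (z * (starRingEnd ℂ) z - Complex.exp ((θ₀:ℝ) * Complex.I) * (starRingEnd ℂ) z) *
          (Complex.normSq v : ℂ) := by rw [h4]; ring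
    _ = (1 - Complex.exp (((θ₀ - θ : ℝ) : ℂ) * Complex.I)) * (Complex.normSq v : ℂ) := by
        rw [h1, h2, h3]

lemma re_formula (x r s : ℝ) :
    ((1 - Complex.exp ((x:ℂ) * Complex.I)) * (r : ℂ) * (s : ℂ)).re =
      (1 - Real.cos x) * r * s := by
  have h : (Complex.exp ((x:ℂ) * Complex.I)).re = Real.cos x := by
    rw [Complex.exp_ofReal_mul_I_re]
  simp [Complex.mul_re, Complex.sub_re, Complex.sub_im, h]

lemma popuc_unique {θ₀ : ℝ} {μ : Measure ℝ} [IsFiniteMeasure μ]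
    (hsupp : ∀ F : Finset ℝ, μ (Set.Ico θ₀ (θ₀ + 2 * Real.pi) \ ↑F) ≠ 0)
    {w : ℝ → ℝ}
    (hwpos : ∀ θ ∈ Set.Ico θ₀ (θ₀ + 2 * Real.pi), 0 < w θ)
    (hwint : IntegrableOn w (Set.Ico θ₀ (θ₀ + 2 * Real.pi)) μ)
    {n : ℕ} {p q : Polynomial ℂ}
    (hpm : p.Monic) (hqm : q.Monic) (hpd : p.natDegree = n) (hqd : q.natDegree = n)
    (hpu : p.eval (Complex.exp ((θ₀:ℝ) * Complex.I)) = 0)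
    (hqu : q.eval (Complex.exp ((θ₀:ℝ) * Complex.I)) = 0)
    (hortho : ∀ g : Polynomial ℂ, g.natDegree ≤ n - 1 → g.eval 0 = 0 →
      (∫ θ in Set.Ico θ₀ (θ₀ + 2 * Real.pi),
        p.eval (Complex.exp (θ * Complex.I)) *
          (starRingEnd ℂ) (g.eval (Complex.exp (θ * Complex.I))) * (w θ : ℂ) ∂μ) = 0 ∧
      (∫ θ in Set.Ico θ₀ (θ₀ + 2 * Real.pi),
        q.eval (Complex.exp (θ * Complex.I)) *
          (starRingEnd ℂ) (g.eval (Complex.exp (θ * Complex.I))) * (w θ : ℂ) ∂μ) = 0) :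
    p = q := by
  by_contra hpq
  set u : ℂ := Complex.exp ((θ₀:ℝ) * Complex.I) with hu
  set R : Polynomial ℂ := p - q with hRdef
  have hR0 : R ≠ 0 := sub_ne_zero.mpr hpq
  have hdegR : R.natDegree < n := by
    have h1 : R.degree < p.degree := by
      apply Polynomial.degree_sub_lt
      · rw [Polynomial.degree_eq_natDegree hpm.ne_zero,
          Polynomial.degree_eq_natDegree hqm.ne_zero, hpd, hqd]
      · exact hpm.ne_zero
      · rw [hpm.leadingCoeff, hqm.leadingCoeff]
    rw [Polynomial.degree_eq_natDegree hpm.ne_zero, hpd] at h1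
    exact (Polynomial.natDegree_lt_iff_degree_lt hR0).mpr h1
  have hRu : R.IsRoot u := by
    simp [Polynomial.IsRoot, hRdef, hpu, hqu]
  obtain ⟨S, hS⟩ : (Polynomial.X - Polynomial.C u) ∣ R := Polynomial.dvd_iff_isRoot.mpr hRu
  have hS0 : S ≠ 0 := by
    intro h; rw [h, mul_zero] at hS; exact hR0 hS
  have hXCu : (Polynomial.X - Polynomial.C u) ≠ (0 : Polynomial ℂ) := Polynomial.X_sub_C_ne_zero u
  have hdegS : R.natDegree = 1 + S.natDegree := by
    rw [hS, Polynomial.natDegree_mul hXCu hS0, Polynomial.natDegree_X_sub_C]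
  set g : Polynomial ℂ := Polynomial.X * S with hgdef
  have hgdeg : g.natDegree ≤ n - 1 := by
    have : g.natDegree = 1 + S.natDegree := by
      rw [hgdef, Polynomial.natDegree_mul Polynomial.X_ne_zero hS0, Polynomial.natDegree_X]
    omega
  have hg0 : g.eval 0 = 0 := by simp [hgdef]
  obtain ⟨hop, hoq⟩ := hortho g hgdeg hg0
  have hip := integrable_aux hwint p g
  have hiq := integrable_aux hwint q g
  -- the difference integral vanishes
  have hiR : IntegrableOn (fun θ : ℝ => R.eval (Complex.exp (θ * Complex.I)) *
      (starRingEnd ℂ) (g.eval (Complex.exp (θ * Complex.I))) * (w θ : ℂ))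
      (Set.Ico θ₀ (θ₀ + 2 * Real.pi)) μ := integrable_aux hwint R g
  have hIR : (∫ θ in Set.Ico θ₀ (θ₀ + 2 * Real.pi),
      R.eval (Complex.exp (θ * Complex.I)) *
        (starRingEnd ℂ) (g.eval (Complex.exp (θ * Complex.I))) * (w θ : ℂ) ∂μ) = 0 := by
    have hsub := integral_sub hip hiq
    have heq : (fun θ : ℝ => p.eval (Complex.exp (θ * Complex.I)) *
        (starRingEnd ℂ) (g.eval (Complex.exp (θ * Complex.I))) * (w θ : ℂ) -
        q.eval (Complex.exp (θ * Complex.I)) *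
        (starRingEnd ℂ) (g.eval (Complex.exp (θ * Complex.I))) * (w θ : ℂ)) =
        (fun θ : ℝ => R.eval (Complex.exp (θ * Complex.I)) *
        (starRingEnd ℂ) (g.eval (Complex.exp (θ * Complex.I))) * (w θ : ℂ)) := by
      funext θ; rw [hRdef]; simp [Polynomial.eval_sub]; ring
    rw [heq] at hsub
    rw [hsub, hop, hoq, sub_zero]
  -- pass to real parts
  set A : ℝ → ℂ := fun θ => R.eval (Complex.exp (θ * Complex.I)) *
      (starRingEnd ℂ) (g.eval (Complex.exp (θ * Complex.I))) * (w θ : ℂ) with hAdef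
  have hre : (∫ θ in Set.Ico θ₀ (θ₀ + 2 * Real.pi), (A θ).re ∂μ) = 0 := by
    have h := integral_re hiR
    simp only [RCLike.re_to_complex] at h
    rw [h, hIR, Complex.zero_re]
  -- pointwise formula for the real part
  have hAre : ∀ θ : ℝ, (A θ).re =
      (1 - Real.cos (θ₀ - θ)) * Complex.normSq (S.eval (Complex.exp (θ * Complex.I))) * w θ := by
    intro θ
    have hRev : R.eval (Complex.exp ((θ:ℝ) * Complex.I)) =
        (Complex.exp ((θ:ℝ) * Complex.I) - u) * S.eval (Complex.exp ((θ:ℝ) * Complex.I)) := by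
      rw [hS]; simp [Polynomial.eval_mul]
    have pr := pointwise_re θ₀ θ S
    rw [← hu] at pr
    have hA : A θ = R.eval (Complex.exp ((θ:ℝ) * Complex.I)) *
        (starRingEnd ℂ) (g.eval (Complex.exp ((θ:ℝ) * Complex.I))) * (w θ : ℂ) := rfl
    rw [hA, hRev, hgdef, pr]
    exact re_formula (θ₀ - θ) _ (w θ)
  -- nonnegativity of the real part on the interval
  have hnonneg : ∀ θ ∈ Set.Ico θ₀ (θ₀ + 2 * Real.pi), 0 ≤ (A θ).re := by
    intro θ hθ
    rw [hAre θ]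
    have h1 : 0 ≤ 1 - Real.cos (θ₀ - θ) := by
      have := Real.cos_le_one (θ₀ - θ); linarith
    exact mul_nonneg (mul_nonneg h1 (Complex.normSq_nonneg _)) (le_of_lt (hwpos θ hθ))
  -- the nonnegative integrand is a.e. zero
  have haez : ∀ᵐ θ ∂(μ.restrict (Set.Ico θ₀ (θ₀ + 2 * Real.pi))), (A θ).re = 0 := by
    have hnn : 0 ≤ᵐ[μ.restrict (Set.Ico θ₀ (θ₀ + 2 * Real.pi))] (fun θ => (A θ).re) :=
      (ae_restrict_iff' measurableSet_Ico).mpr (Filter.Eventually.of_forall hnonneg)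
    have hint : Integrable (fun θ => (A θ).re) (μ.restrict (Set.Ico θ₀ (θ₀ + 2 * Real.pi))) :=
      hiR.re
    have := (integral_eq_zero_iff_of_nonneg_ae hnn hint).mp hre
    filter_upwards [this] with θ hθ using hθ
  -- almost every θ in the interval lies in a finite exceptional set
  set Fs : Set ℝ := {θ₀} ∪ {θ ∈ Set.Ico θ₀ (θ₀ + 2 * Real.pi) |
      S.eval (Complex.exp (θ * Complex.I)) = 0} with hFs
  have hFfin : Fs.Finite := by
    apply Set.Finite.union (Set.finite_singleton θ₀)
    apply Set.Finite.of_finite_image (f := fun θ : ℝ => Complex.exp (θ * Complex.I))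
    · apply Set.Finite.subset (S.roots.toFinset : Finset ℂ).finite_toSet
      rintro z ⟨θ, ⟨hθI, hθz⟩, rfl⟩
      simp only [Multiset.mem_toFinset, Finset.mem_coe]
      rw [Polynomial.mem_roots hS0]
      exact hθz
    · exact (exp_injOn θ₀).mono (fun θ hθ => hθ.1)
  have hsub2 : ∀ᵐ θ ∂(μ.restrict (Set.Ico θ₀ (θ₀ + 2 * Real.pi))), θ ∈ Fs := by
    filter_upwards [haez, ae_restrict_mem measurableSet_Ico] with θ h0 hmem
    by_cases hθ0 : θ = θ₀
    · left; exact hθ0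
    · right
      refine ⟨hmem, ?_⟩
      have hlt : θ₀ < θ := lt_of_le_of_ne hmem.1 (Ne.symm hθ0)
      have hcos : Real.cos (θ₀ - θ) < 1 := cos_lt_one_aux hlt hmem.2
      have hw := hwpos θ hmem
      rw [hAre θ] at h0
      have hnsq : Complex.normSq (S.eval (Complex.exp (θ * Complex.I))) = 0 := by
        by_contra hnz
        have hpos : 0 < Complex.normSq (S.eval (Complex.exp (θ * Complex.I))) :=
          lt_of_le_of_ne (Complex.normSq_nonneg _) (Ne.symm hnz)
        have hp3 := mul_pos (mul_pos (show (0:ℝ) < 1 - Real.cos (θ₀ - θ) by linarith) hpos) hw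
        linarith
      exact Complex.normSq_eq_zero.mp hnsq
  -- contradiction with the infinite support
  have hz : μ (Set.Ico θ₀ (θ₀ + 2 * Real.pi) \ ↑hFfin.toFinset) = 0 := by
    rw [Set.Finite.coe_toFinset]
    have h1 : (μ.restrict (Set.Ico θ₀ (θ₀ + 2 * Real.pi))) {θ | θ ∉ Fs} = 0 := hsub2
    have h2 : (μ.restrict (Set.Ico θ₀ (θ₀ + 2 * Real.pi)))
        (Set.Ico θ₀ (θ₀ + 2 * Real.pi) \ Fs) = 0 :=
      measure_mono_null (fun θ hθ => hθ.2) h1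
    rw [Measure.restrict_apply' measurableSet_Ico] at h2
    rwa [Set.inter_eq_self_of_subset_left Set.diff_subset] at h2
  exact hsupp hFfin.toFinset hz

end MixedPopucAux


open Polynomial

/-- Remark (part 1): under the time-independent-weight mixed paraorthogonality setup
with fixed zero `e^{iθ₀}`, if `n > N + 1`, every mass point `e^{iω_j(t)}` is a zero of
`P(·; t)`, and `e^{iω_j(t)} ≠ e^{iφ_n(t)}` for all `j` and `t`, then `φ_n'(t) = 0` for
all `t ∈ I`, i.e. the zero `ζ(t) = e^{iφ_n(t)}` does not move as `t` increases. -/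
theorem mixed_popuc_zero_fixed_when_mass_points_are_zeros
    -- the open interval `I = (a, b)`
    (a b : ℝ) (hab : a < b)
    -- the finite measure `μ` on `[θ₀, θ₀ + 2π)` with infinite support
    (θ₀ : ℝ) (μ : MeasureTheory.Measure ℝ) [MeasureTheory.IsFiniteMeasure μ]
    (hsupp : ∀ F : Finset ℝ, μ (Set.Ico θ₀ (θ₀ + 2 * Real.pi) \ ↑F) ≠ 0)
    -- the time-independent weight `w(θ)`: positive and `μ`-integrable
    (w : ℝ → ℝ)
    (hwpos : ∀ θ ∈ Set.Ico θ₀ (θ₀ + 2 * Real.pi), 0 < w θ)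
    (hwint : MeasureTheory.IntegrableOn w (Set.Ico θ₀ (θ₀ + 2 * Real.pi)) μ)
    -- the masses `γ_j` and mass points `ω_j ∈ (θ₀, θ₀ + 2π)`, `j = 0, …, N`
    (N : ℕ) (γ ω : ℕ → ℝ → ℝ)
    (hγpos : ∀ j ≤ N, ∀ t ∈ Set.Ioo a b, 0 < γ j t)
    (hγdiff : ∀ j ≤ N, ∀ t ∈ Set.Ioo a b, DifferentiableAt ℝ (γ j) t)
    (hωdiff : ∀ j ≤ N, ∀ t ∈ Set.Ioo a b, DifferentiableAt ℝ (ω j) t)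
    (hωrange : ∀ j ≤ N, ∀ t ∈ Set.Ioo a b, ω j t ∈ Set.Ioo θ₀ (θ₀ + 2 * Real.pi))
    -- the zeros `e^{iφ_k(t)}`, `k = 1, …, n`, of the POPUC `P(·; t)`
    (n : ℕ) (hn : 2 ≤ n) (φ : ℕ → ℝ → ℝ)
    (hφdiff : ∀ k ∈ Finset.Icc 1 n, ∀ t ∈ Set.Ioo a b, DifferentiableAt ℝ (φ k) t)
    (hfix : ∀ t ∈ Set.Ioo a b, φ (n - 1) t = θ₀)
    (hφnrange : ∀ t ∈ Set.Ioo a b, φ n t ∈ Set.Ioo θ₀ (θ₀ + 2 * Real.pi))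
    (P : ℂ → ℝ → ℂ)
    (hP : ∀ z t, P z t = ∏ k ∈ Finset.Icc 1 n, (z - Complex.exp (φ k t * Complex.I)))
    (hdistinct : ∀ t ∈ Set.Ioo a b, ∀ j ∈ Finset.Icc 1 n, ∀ k ∈ Finset.Icc 1 n, j ≠ k →
      Complex.exp (φ j t * Complex.I) ≠ Complex.exp (φ k t * Complex.I))
    -- paraorthogonality with respect to `w(θ) dμ(θ) + Σ_j γ_j(t) δ(θ − ω_j(t))`
    (hpara : ∀ t ∈ Set.Ioo a b, ∀ g : Polynomial ℂ,
      g.natDegree ≤ n - 1 → g.eval 0 = 0 →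
      (∫ θ in Set.Ico θ₀ (θ₀ + 2 * Real.pi),
          P (Complex.exp (θ * Complex.I)) t *
            (starRingEnd ℂ) (g.eval (Complex.exp (θ * Complex.I))) *
            (w θ : ℂ) ∂μ) +
        ∑ j ∈ Finset.range (N + 1), (γ j t : ℂ) *
          P (Complex.exp (ω j t * Complex.I)) t *
          (starRingEnd ℂ) (g.eval (Complex.exp (ω j t * Complex.I))) = 0)
    -- additional hypotheses
    (hnN : N + 1 < n)
    (hmass_zero : ∀ j ≤ N, ∀ t ∈ Set.Ioo a b,
      P (Complex.exp (ω j t * Complex.I)) t = 0)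
    (hne : ∀ j ≤ N, ∀ t ∈ Set.Ioo a b,
      Complex.exp (ω j t * Complex.I) ≠ Complex.exp (φ n t * Complex.I))
    -- conclusion
    : ∀ t ∈ Set.Ioo a b, deriv (φ n) t = 0 := by
  intro t ht
  have h1n : 1 ≤ n := by omega
  have hmemn : n ∈ Finset.Icc 1 n := by simp [Finset.mem_Icc]; omega
  have hmemn1 : n - 1 ∈ Finset.Icc 1 n := by simp [Finset.mem_Icc]; omega
  -- the polynomial family
  set p : ℝ → Polynomial ℂ := fun r =>
    ∏ k ∈ Finset.Icc 1 n, (Polynomial.X - Polynomial.C (Complex.exp (φ k r * Complex.I)))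
    with hpdef
  have hPp : ∀ z r, P z r = (p r).eval z := by
    intro z r
    rw [hP, hpdef]
    simp [Polynomial.eval_prod]
  have hpm : ∀ r, (p r).Monic := fun r =>
    Polynomial.monic_prod_of_monic _ _ (fun k _ => Polynomial.monic_X_sub_C _)
  have hpd : ∀ r, (p r).natDegree = n := by
    intro r
    rw [hpdef]
    rw [Polynomial.natDegree_prod _ _ (fun k _ => Polynomial.X_sub_C_ne_zero _)]
    simp [Polynomial.natDegree_X_sub_C]
  have hproot : ∀ r ∈ Set.Ioo a b, (p r).eval (Complex.exp ((θ₀:ℝ) * Complex.I)) = 0 := by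
    intro r hr
    rw [hpdef]
    simp only [Polynomial.eval_prod]
    apply Finset.prod_eq_zero hmemn1
    rw [hfix r hr]
    simp
  -- orthogonality of `p r` against admissible `g` w.r.t. `w dμ` alone
  have key : ∀ r ∈ Set.Ioo a b, ∀ g : Polynomial ℂ, g.natDegree ≤ n - 1 → g.eval 0 = 0 →
      (∫ θ in Set.Ico θ₀ (θ₀ + 2 * Real.pi),
        (p r).eval (Complex.exp (θ * Complex.I)) *
          (starRingEnd ℂ) (g.eval (Complex.exp (θ * Complex.I))) * (w θ : ℂ) ∂μ) = 0 := by
    intro r hr g hgdeg hg0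
    have hpar := hpara r hr g hgdeg hg0
    simp only [hPp] at hpar
    have hsum : ∑ j ∈ Finset.range (N + 1), (γ j r : ℂ) *
        (p r).eval (Complex.exp (ω j r * Complex.I)) *
        (starRingEnd ℂ) (g.eval (Complex.exp (ω j r * Complex.I))) = 0 := by
      apply Finset.sum_eq_zero
      intro j hj
      have hjN : j ≤ N := by simpa [Nat.lt_succ_iff] using Finset.mem_range.mp hj
      have hz : (p r).eval (Complex.exp (ω j r * Complex.I)) = 0 := by
        rw [← hPp]; exact hmass_zero j hjN r hr
      rw [hz, mul_zero, zero_mul]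
    rwa [hsum, add_zero] at hpar
  -- the polynomial does not depend on time
  have hpeq : ∀ r ∈ Set.Ioo a b, p r = p t := by
    intro r hr
    exact popuc_unique hsupp hwpos hwint (hpm r) (hpm t) (hpd r) (hpd t)
      (hproot r hr) (hproot t ht)
      (fun g hd h0 => ⟨key r hr g hd h0, key t ht g hd h0⟩)
  -- the moving zero lies in the fixed finite set of zeros of `p t`
  set f : ℝ → ℂ := fun r => Complex.exp (φ n r * Complex.I) with hfdef
  set Fset : Set ℂ := (fun k => Complex.exp (φ k t * Complex.I)) '' ↑(Finset.Icc 1 n)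
    with hFdef
  have hFfin : Fset.Finite := Set.Finite.image _ (Finset.Icc 1 n).finite_toSet
  have hmaps : Set.MapsTo f (Set.Ioo a b) Fset := by
    intro r hr
    have hroot : (p t).eval (f r) = 0 := by
      rw [← hpeq r hr, hpdef]
      simp only [Polynomial.eval_prod]
      apply Finset.prod_eq_zero hmemn
      simp [hfdef]
    rw [hpdef] at hroot
    simp only [Polynomial.eval_prod] at hroot
    obtain ⟨k, hk, hk0⟩ := Finset.prod_eq_zero_iff.mp hroot
    have heq : f r = Complex.exp (φ k t * Complex.I) := by
      simp only [Polynomial.eval_sub, Polynomial.eval_X, Polynomial.eval_C] at hk0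
      exact sub_eq_zero.mp hk0
    exact ⟨k, hk, heq.symm⟩
  have hcont : ContinuousOn f (Set.Ioo a b) := by
    intro r hr
    have hd := hφdiff n hmemn r hr
    have h1 : ContinuousAt (fun x => ((φ n x : ℝ) : ℂ) * Complex.I) r :=
      (Complex.continuous_ofReal.continuousAt.comp hd.continuousAt).mul continuousAt_const
    exact (Complex.continuous_exp.continuousAt.comp h1).continuousWithinAt
  haveI : Finite ↥Fset := hFfin.to_subtype
  have hconst : ∀ x ∈ Set.Ioo a b, f x = f t := fun x hx =>
    (isPreconnected_Ioo).constant_of_mapsTo hFfin.isDiscrete hcont hmaps hx ht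
  -- conclude that the derivative vanishes
  have hEq : f =ᶠ[nhds t] fun _ => f t :=
    Filter.eventuallyEq_of_mem (isOpen_Ioo.mem_nhds ht) hconst
  have h0 : HasDerivAt f 0 t := (hasDerivAt_const t (f t)).congr_of_eventuallyEq hEq
  have hd := (hφdiff n hmemn t ht).hasDerivAt
  have h3 := (hd.ofReal_comp.mul_const Complex.I).cexp
  have h4 := h3.unique h0
  have h5 : (Complex.exp ((φ n t : ℂ) * Complex.I)) ≠ 0 := Complex.exp_ne_zero _
  have h6 : ((deriv (φ n) t : ℝ) : ℂ) * Complex.I = 0 := by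
    rcases mul_eq_zero.mp h4 with h | h
    · exact absurd h h5
    · exact h
  rcases mul_eq_zero.mp h6 with h | h
  · exact_mod_cast h
  · exact absurd h Complex.I_ne_zero
end

section
/- (Remark, part 2.) Under the stated time-independent-weight mixed paraorthogonality setup with fixed zero e^{iθ₀}, assume in addition that n ≥ N+1, that the mass points are fixed, i.e. ω_j′(t) = 0 for every j = 0,…,N and every t ∈ I, and that P(e^{iω_j(t)};t) = 0 for every j and every t. Then φ_n′(t) = 0 for all t ∈ I; that is, the zero ζ(t) = e^{iφ_n(t)} does not move as t increases on I. -/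
open Polynomial

section AuxPOPUC
open MeasureTheory
variable (θ₀ : ℝ)

lemma exp_mul_I_injOn_Ico {x y : ℝ}
    (hx : x ∈ Set.Ico θ₀ (θ₀ + 2 * Real.pi)) (hy : y ∈ Set.Ico θ₀ (θ₀ + 2 * Real.pi))
    (h : Complex.exp (x * Complex.I) = Complex.exp (y * Complex.I)) : x = y := by
  rw [Complex.exp_eq_exp_iff_exists_int] at h
  obtain ⟨m, hm⟩ := h
  have hm' : ((x : ℂ)) * Complex.I = ((y + m * (2 * Real.pi) : ℝ) : ℂ) * Complex.I := by
    rw [hm]; push_cast; ring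
  have hre : x = y + m * (2 * Real.pi) := by
    have := mul_right_cancel₀ Complex.I_ne_zero hm'
    exact_mod_cast this
  have hπ := Real.pi_pos
  obtain ⟨hx1, hx2⟩ := hx
  obtain ⟨hy1, hy2⟩ := hy
  have hm1 : (m : ℝ) < 1 := by nlinarith
  have hm2 : (-1 : ℝ) < m := by nlinarith
  have : m = 0 := by
    have h1 : m < 1 := by exact_mod_cast hm1
    have h2 : (-1 : ℤ) < m := by exact_mod_cast hm2
    omega
  rw [this] at hre; simpa using hre

lemma cos_lt_one_of_Ioo {x : ℝ} (h1 : 0 < x) (h2 : x < 2 * Real.pi) : Real.cos x < 1 := by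
  refine lt_of_le_of_ne (Real.cos_le_one x) (fun h => ?_)
  rw [Real.cos_eq_one_iff] at h
  obtain ⟨m, hm⟩ := h
  have hπ := Real.pi_pos
  have hm1 : (m : ℝ) < 1 := by nlinarith
  have hm2 : (0 : ℝ) < m := by nlinarith
  have h1 : m < 1 := by exact_mod_cast hm1
  have h2 : (0 : ℤ) < m := by exact_mod_cast hm2
  omega

lemma integrable_cont_mul_weight (μ : Measure ℝ) (w : ℝ → ℝ)
    (hwpos : ∀ θ ∈ Set.Ico θ₀ (θ₀ + 2 * Real.pi), 0 < w θ)
    (hwint : IntegrableOn w (Set.Ico θ₀ (θ₀ + 2 * Real.pi)) μ)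
    (F : ℝ → ℂ) (hF : Continuous F) :
    Integrable (fun θ => F θ * (w θ : ℂ)) (μ.restrict (Set.Ico θ₀ (θ₀ + 2 * Real.pi))) := by
  obtain ⟨C, hC⟩ := (isCompact_Icc (a := θ₀) (b := θ₀ + 2 * Real.pi)).exists_bound_of_continuousOn
    hF.continuousOn
  refine Integrable.mono' (hwint.const_mul C) ?_ ?_
  · exact hF.aestronglyMeasurable.mul
      (Complex.continuous_ofReal.comp_aestronglyMeasurable hwint.aestronglyMeasurable)
  · rw [ae_restrict_iff' measurableSet_Ico]
    filter_upwards with θ hθ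
    have hw := (hwpos θ hθ).le
    have h1 : ‖F θ * (w θ : ℂ)‖ = ‖F θ‖ * w θ := by
      rw [norm_mul, Complex.norm_real, Real.norm_of_nonneg hw]
    rw [h1]
    exact mul_le_mul_of_nonneg_right (hC θ (Set.Ico_subset_Icc_self hθ)) hw

lemma continuous_exp_theta : Continuous (fun θ : ℝ => Complex.exp ((θ : ℂ) * Complex.I)) :=
  Complex.continuous_exp.comp (Complex.continuous_ofReal.mul continuous_const)

end AuxPOPUC

open MeasureTheory

/-- Remark (part 2): under the time-independent-weight mixed paraorthogonality setup
with fixed zero `e^{iθ₀}`, if `n ≥ N + 1`, the mass points are fixed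
(`ω_j'(t) = 0` for all `j` and `t`), and every mass point `e^{iω_j(t)}` is a zero of
`P(·; t)`, then `φ_n'(t) = 0` for all `t ∈ I`, i.e. the zero `ζ(t) = e^{iφ_n(t)}`
does not move as `t` increases. -/
theorem mixed_popuc_zero_fixed_when_fixed_mass_points_are_zeros
    -- the open interval `I = (a, b)`
    (a b : ℝ) (hab : a < b)
    -- the finite measure `μ` on `[θ₀, θ₀ + 2π)` with infinite support
    (θ₀ : ℝ) (μ : MeasureTheory.Measure ℝ) [MeasureTheory.IsFiniteMeasure μ]
    (hsupp : ∀ F : Finset ℝ, μ (Set.Ico θ₀ (θ₀ + 2 * Real.pi) \ ↑F) ≠ 0)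
    -- the time-independent weight `w(θ)`: positive and `μ`-integrable
    (w : ℝ → ℝ)
    (hwpos : ∀ θ ∈ Set.Ico θ₀ (θ₀ + 2 * Real.pi), 0 < w θ)
    (hwint : MeasureTheory.IntegrableOn w (Set.Ico θ₀ (θ₀ + 2 * Real.pi)) μ)
    -- the masses `γ_j` and mass points `ω_j ∈ (θ₀, θ₀ + 2π)`, `j = 0, …, N`
    (N : ℕ) (γ ω : ℕ → ℝ → ℝ)
    (hγpos : ∀ j ≤ N, ∀ t ∈ Set.Ioo a b, 0 < γ j t)
    (hγdiff : ∀ j ≤ N, ∀ t ∈ Set.Ioo a b, DifferentiableAt ℝ (γ j) t)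
    (hωdiff : ∀ j ≤ N, ∀ t ∈ Set.Ioo a b, DifferentiableAt ℝ (ω j) t)
    (hωrange : ∀ j ≤ N, ∀ t ∈ Set.Ioo a b, ω j t ∈ Set.Ioo θ₀ (θ₀ + 2 * Real.pi))
    -- the zeros `e^{iφ_k(t)}`, `k = 1, …, n`, of the POPUC `P(·; t)`
    (n : ℕ) (hn : 2 ≤ n) (φ : ℕ → ℝ → ℝ)
    (hφdiff : ∀ k ∈ Finset.Icc 1 n, ∀ t ∈ Set.Ioo a b, DifferentiableAt ℝ (φ k) t)
    (hfix : ∀ t ∈ Set.Ioo a b, φ (n - 1) t = θ₀)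
    (hφnrange : ∀ t ∈ Set.Ioo a b, φ n t ∈ Set.Ioo θ₀ (θ₀ + 2 * Real.pi))
    (P : ℂ → ℝ → ℂ)
    (hP : ∀ z t, P z t = ∏ k ∈ Finset.Icc 1 n, (z - Complex.exp (φ k t * Complex.I)))
    (hdistinct : ∀ t ∈ Set.Ioo a b, ∀ j ∈ Finset.Icc 1 n, ∀ k ∈ Finset.Icc 1 n, j ≠ k →
      Complex.exp (φ j t * Complex.I) ≠ Complex.exp (φ k t * Complex.I))
    -- paraorthogonality with respect to `w(θ) dμ(θ) + Σ_j γ_j(t) δ(θ − ω_j(t))`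
    (hpara : ∀ t ∈ Set.Ioo a b, ∀ g : Polynomial ℂ,
      g.natDegree ≤ n - 1 → g.eval 0 = 0 →
      (∫ θ in Set.Ico θ₀ (θ₀ + 2 * Real.pi),
          P (Complex.exp (θ * Complex.I)) t *
            (starRingEnd ℂ) (g.eval (Complex.exp (θ * Complex.I))) *
            (w θ : ℂ) ∂μ) +
        ∑ j ∈ Finset.range (N + 1), (γ j t : ℂ) *
          P (Complex.exp (ω j t * Complex.I)) t *
          (starRingEnd ℂ) (g.eval (Complex.exp (ω j t * Complex.I))) = 0)
    -- additional hypotheses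
    (hnN : N + 1 ≤ n)
    (hωfixed : ∀ j ≤ N, ∀ t ∈ Set.Ioo a b, deriv (ω j) t = 0)
    (hmass_zero : ∀ j ≤ N, ∀ t ∈ Set.Ioo a b,
      P (Complex.exp (ω j t * Complex.I)) t = 0)
    -- conclusion
    : ∀ t ∈ Set.Ioo a b, deriv (φ n) t = 0 := by
  intro t ht
  have hπ := Real.pi_pos
  set Ik := Set.Ico θ₀ (θ₀ + 2 * Real.pi) with hIk
  -- the polynomial family
  set Q : ℝ → Polynomial ℂ :=
    fun s => ∏ k ∈ Finset.Icc 1 n, (X - C (Complex.exp (φ k s * Complex.I))) with hQ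
  have hQeval : ∀ z s, (Q s).eval z = ∏ k ∈ Finset.Icc 1 n,
      (z - Complex.exp (φ k s * Complex.I)) := by
    intro z s; simp [hQ, eval_prod]
  have hPQ : ∀ z s, P z s = (Q s).eval z := by
    intro z s; rw [hP, hQeval]
  have hQmonic : ∀ s, (Q s).Monic :=
    fun s => monic_prod_of_monic _ _ (fun k _ => monic_X_sub_C _)
  have hQdeg : ∀ s, (Q s).natDegree = n := by
    intro s
    rw [hQ]
    rw [natDegree_prod_of_monic _ _ (fun k _ => monic_X_sub_C _)]
    simp [natDegree_X_sub_C, Nat.card_Icc]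
  -- orthogonality
  have horth : ∀ s ∈ Set.Ioo a b, ∀ g : Polynomial ℂ, g.natDegree ≤ n - 1 → g.eval 0 = 0 →
      (∫ θ in Ik, (Q s).eval (Complex.exp (θ * Complex.I)) *
        (starRingEnd ℂ) (g.eval (Complex.exp (θ * Complex.I))) * (w θ : ℂ) ∂μ) = 0 := by
    intro s hs g h1 h2
    have h := hpara s hs g h1 h2
    rw [Finset.sum_eq_zero (fun j hj => by
      rw [hmass_zero j (by simpa [Nat.lt_succ_iff] using Finset.mem_range.mp hj) s hs]
      ring)] at h
    rw [add_zero] at h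
    simp only [hPQ] at h
    exact h
  -- key: Q is constant on (a,b)
  have hQconst : ∀ s₁ ∈ Set.Ioo a b, ∀ s₂ ∈ Set.Ioo a b, Q s₁ = Q s₂ := by
    intro s₁ h₁ s₂ h₂
    by_contra hne
    set D : Polynomial ℂ := Q s₁ - Q s₂ with hD
    have hDne : D ≠ 0 := sub_ne_zero.mpr hne
    have hdegQ : ∀ s, (Q s).degree = (n : WithBot ℕ) := by
      intro s
      rw [degree_eq_natDegree (hQmonic s).ne_zero, hQdeg s]
    have hdegD : D.degree < (n : WithBot ℕ) := by
      rw [hD]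
      calc (Q s₁ - Q s₂).degree < (Q s₁).degree :=
            degree_sub_lt (by rw [hdegQ s₁, hdegQ s₂]) (hQmonic s₁).ne_zero
              (by rw [(hQmonic s₁).leadingCoeff, (hQmonic s₂).leadingCoeff])
        _ = (n : WithBot ℕ) := hdegQ s₁
    have hnatD : D.natDegree ≤ n - 1 := by
      have := (natDegree_lt_iff_degree_lt hDne).mpr hdegD
      omega
    set ζ₀ : ℂ := Complex.exp ((θ₀ : ℂ) * Complex.I) with hζ₀
    have hroot : ∀ s ∈ Set.Ioo a b, (Q s).eval ζ₀ = 0 := by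
      intro s hs
      rw [hQeval]
      refine Finset.prod_eq_zero (i := n - 1) (Finset.mem_Icc.mpr ⟨by omega, by omega⟩) ?_
      rw [hfix s hs, sub_self]
    have hDroot : D.IsRoot ζ₀ := by
      simp [hD, IsRoot, eval_sub, hroot s₁ h₁, hroot s₂ h₂]
    obtain ⟨E, hE⟩ := dvd_iff_isRoot.mpr hDroot
    have hEne : E ≠ 0 := by
      rintro rfl
      rw [mul_zero] at hE
      exact hDne hE
    have hdegE : E.natDegree ≤ n - 2 := by
      have hmul := natDegree_mul (X_sub_C_ne_zero ζ₀) hEne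
      rw [← hE, natDegree_X_sub_C] at hmul
      omega
    set g : Polynomial ℂ := X * E with hg
    have hgdeg : g.natDegree ≤ n - 1 := by
      rw [hg, natDegree_mul X_ne_zero hEne, natDegree_X]
      omega
    have hg0 : g.eval 0 = 0 := by simp [hg]
    have hint1 := horth s₁ h₁ g hgdeg hg0
    have hint2 := horth s₂ h₂ g hgdeg hg0
    -- integrability
    have hcexp : Continuous (fun θ : ℝ => Complex.exp ((θ : ℂ) * Complex.I)) :=
      continuous_exp_theta
    have hcont : ∀ p : Polynomial ℂ,
        Continuous (fun θ : ℝ => p.eval (Complex.exp ((θ : ℂ) * Complex.I))) :=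
      fun p => p.continuous.comp hcexp
    have hF : ∀ p : Polynomial ℂ, Continuous (fun θ : ℝ =>
        p.eval (Complex.exp ((θ : ℂ) * Complex.I)) *
          (starRingEnd ℂ) (g.eval (Complex.exp ((θ : ℂ) * Complex.I)))) :=
      fun p => (hcont p).mul (Complex.continuous_conj.comp (hcont g))
    have hI : ∀ p : Polynomial ℂ, Integrable (fun θ : ℝ =>
        p.eval (Complex.exp ((θ : ℂ) * Complex.I)) *
          (starRingEnd ℂ) (g.eval (Complex.exp ((θ : ℂ) * Complex.I))) * (w θ : ℂ))
        (μ.restrict Ik) := by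
      intro p
      exact integrable_cont_mul_weight θ₀ μ w hwpos hwint _ (hF p)
    -- the difference integral vanishes
    have hGF : (∫ θ in Ik, D.eval (Complex.exp ((θ : ℂ) * Complex.I)) *
        (starRingEnd ℂ) (g.eval (Complex.exp ((θ : ℂ) * Complex.I))) * (w θ : ℂ) ∂μ) = 0 := by
      have hsub := integral_sub (hI (Q s₁)) (hI (Q s₂))
      rw [hint1, hint2, sub_zero] at hsub
      rw [← hsub]
      congr 1
      funext θ
      rw [hD, eval_sub]
      ring
    have hGFint := hI D
    -- real part computation
    set R : ℝ → ℝ := fun θ =>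
      (1 - Real.cos (θ₀ - θ)) *
        (Complex.normSq (E.eval (Complex.exp ((θ : ℂ) * Complex.I))) * w θ) with hR
    have hRe : ∀ θ : ℝ, (D.eval (Complex.exp ((θ : ℂ) * Complex.I)) *
        (starRingEnd ℂ) (g.eval (Complex.exp ((θ : ℂ) * Complex.I))) * (w θ : ℂ)).re = R θ := by
      intro θ
      set ζ : ℂ := Complex.exp ((θ : ℂ) * Complex.I) with hζ
      have hconjζ : (starRingEnd ℂ) ζ = Complex.exp (((-θ : ℝ) : ℂ) * Complex.I) := by
        rw [hζ, ← Complex.exp_conj]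
        congr 1
        rw [map_mul, Complex.conj_ofReal, Complex.conj_I]
        push_cast
        ring
      have hDe : D.eval ζ = (ζ - ζ₀) * E.eval ζ := by rw [hE, eval_mul, eval_sub, eval_X, eval_C]
      have hge : g.eval ζ = ζ * E.eval ζ := by rw [hg, eval_mul, eval_X]
      have key : D.eval ζ * (starRingEnd ℂ) (g.eval ζ) * (w θ : ℂ) =
          ((Complex.normSq (E.eval ζ) * w θ : ℝ) : ℂ) *
            (1 - Complex.exp (((θ₀ - θ : ℝ) : ℂ) * Complex.I)) := by
        rw [hDe, hge, map_mul]
        have h1 : ζ * (starRingEnd ℂ) ζ = 1 := by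
          rw [hconjζ, hζ, ← Complex.exp_add]
          push_cast
          ring_nf
          exact Complex.exp_zero
        have h2 : ζ₀ * (starRingEnd ℂ) ζ =
            Complex.exp (((θ₀ - θ : ℝ) : ℂ) * Complex.I) := by
          rw [hconjζ, hζ₀, ← Complex.exp_add]
          congr 1
          push_cast
          ring
        have h3 : E.eval ζ * (starRingEnd ℂ) (E.eval ζ) =
            ((Complex.normSq (E.eval ζ) : ℝ) : ℂ) := Complex.mul_conj _
        calc (ζ - ζ₀) * E.eval ζ * ((starRingEnd ℂ) ζ * (starRingEnd ℂ) (E.eval ζ)) * (w θ : ℂ)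
            = (ζ * (starRingEnd ℂ) ζ - ζ₀ * (starRingEnd ℂ) ζ) *
              ((E.eval ζ * (starRingEnd ℂ) (E.eval ζ)) * (w θ : ℂ)) := by ring
          _ = ((Complex.normSq (E.eval ζ) * w θ : ℝ) : ℂ) *
              (1 - Complex.exp (((θ₀ - θ : ℝ) : ℂ) * Complex.I)) := by
                rw [h1, h2, h3]; push_cast; ring
      have hre1 : (1 - Complex.exp (((θ₀ - θ : ℝ) : ℂ) * Complex.I)).re =
          1 - Real.cos (θ₀ - θ) := by
        rw [Complex.sub_re, Complex.one_re, Complex.exp_ofReal_mul_I_re]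
      rw [key, Complex.re_ofReal_mul, hre1, hR]
      ring
    -- the real integral vanishes, so R = 0 a.e.
    have hReint : Integrable (fun θ : ℝ => (D.eval (Complex.exp ((θ : ℂ) * Complex.I)) *
        (starRingEnd ℂ) (g.eval (Complex.exp ((θ : ℂ) * Complex.I))) * (w θ : ℂ)).re)
        (μ.restrict Ik) := hGFint.re
    have hRint : Integrable R (μ.restrict Ik) := by
      have : R = fun θ : ℝ => (D.eval (Complex.exp ((θ : ℂ) * Complex.I)) *
          (starRingEnd ℂ) (g.eval (Complex.exp ((θ : ℂ) * Complex.I))) * (w θ : ℂ)).re := by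
        funext θ; rw [hRe θ]
      rw [this]; exact hReint
    have hRzero : (∫ θ in Ik, R θ ∂μ) = 0 := by
      have h1 : (∫ θ in Ik, (D.eval (Complex.exp ((θ : ℂ) * Complex.I)) *
          (starRingEnd ℂ) (g.eval (Complex.exp ((θ : ℂ) * Complex.I))) * (w θ : ℂ)).re ∂μ)
          = 0 := by
        have := integral_re hGFint
        rw [hGF] at this
        simpa using this
      rw [← h1]
      congr 1
      funext θ
      rw [hRe θ]
    have hRnonneg : 0 ≤ᵐ[μ.restrict Ik] R := by
      rw [Filter.EventuallyLE, ae_restrict_iff' measurableSet_Ico]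
      filter_upwards with θ hθ
      have hw := (hwpos θ hθ).le
      have hc : Real.cos (θ₀ - θ) ≤ 1 := Real.cos_le_one _
      have := Complex.normSq_nonneg (E.eval (Complex.exp ((θ : ℂ) * Complex.I)))
      exact mul_nonneg (by linarith) (mul_nonneg this hw)
    have hae : R =ᵐ[μ.restrict Ik] 0 :=
      (integral_eq_zero_iff_of_nonneg_ae hRnonneg hRint).mp hRzero
    have hnull : μ ({θ | R θ ≠ 0} ∩ Ik) = 0 := by
      have := hae
      rw [Filter.EventuallyEq, ae_iff] at this
      rw [← Measure.restrict_apply' measurableSet_Ico]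
      exact this
    -- finite exceptional set
    have hTfin : Set.Finite {θ | θ ∈ Ik ∧ E.eval (Complex.exp ((θ : ℂ) * Complex.I)) = 0} := by
      apply Set.Finite.of_finite_image (f := fun θ : ℝ => Complex.exp ((θ : ℂ) * Complex.I))
      · exact (Polynomial.finite_setOf_isRoot hEne).subset (by
          rintro z ⟨θ, ⟨hθ1, hθ2⟩, rfl⟩
          exact hθ2)
      · intro x hx y hy hxy
        exact exp_mul_I_injOn_Ico θ₀ hx.1 hy.1 hxy
    set Ffin : Finset ℝ := insert θ₀ hTfin.toFinset with hFfin
    refine hsupp Ffin (measure_mono_null ?_ hnull)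
    rintro θ ⟨hθI, hθF⟩
    refine ⟨?_, hθI⟩
    simp only [hFfin, Finset.coe_insert, Set.mem_insert_iff, Set.Finite.coe_toFinset,
      Set.mem_setOf_eq, not_or] at hθF
    obtain ⟨hθ0, hθT⟩ := hθF
    have hEval : E.eval (Complex.exp ((θ : ℂ) * Complex.I)) ≠ 0 := fun h => hθT ⟨hθI, h⟩
    have hθgt : θ₀ < θ := lt_of_le_of_ne hθI.1 (Ne.symm hθ0)
    have hθlt : θ < θ₀ + 2 * Real.pi := hθI.2
    have hcos : Real.cos (θ₀ - θ) < 1 := by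
      rw [← Real.cos_neg, neg_sub]
      exact cos_lt_one_of_Ioo (by linarith) (by linarith)
    have hns : 0 < Complex.normSq (E.eval (Complex.exp ((θ : ℂ) * Complex.I))) :=
      Complex.normSq_pos.mpr hEval
    have hw := hwpos θ hθI
    have hRpos : 0 < R θ := mul_pos (by linarith) (mul_pos hns hw)
    exact Set.mem_setOf_eq ▸ ne_of_gt hRpos
  -- φ n is constant on (a,b)
  have hφnconst : ∀ s ∈ Set.Ioo a b, φ n s = φ n t := by
    have hnIcc : n ∈ Finset.Icc 1 n := Finset.mem_Icc.mpr ⟨by omega, le_rfl⟩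
    set S : Set ℝ := {θ | θ ∈ Ik ∧ (Q t).eval (Complex.exp ((θ : ℂ) * Complex.I)) = 0} with hS
    have hSfin : S.Finite := by
      apply Set.Finite.of_finite_image (f := fun θ : ℝ => Complex.exp ((θ : ℂ) * Complex.I))
      · exact (Polynomial.finite_setOf_isRoot (hQmonic t).ne_zero).subset (by
          rintro z ⟨θ, ⟨hθ1, hθ2⟩, rfl⟩
          exact hθ2)
      · intro x hx y hy hxy
        exact exp_mul_I_injOn_Ico θ₀ hx.1 hy.1 hxy
    have himg : (φ n) '' (Set.Ioo a b) ⊆ S := by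
      rintro x ⟨s, hs, rfl⟩
      have hrange := hφnrange s hs
      refine ⟨⟨hrange.1.le, hrange.2⟩, ?_⟩
      rw [← hQconst s hs t ht, hQeval]
      exact Finset.prod_eq_zero hnIcc (sub_self _)
    have hconn : IsPreconnected ((φ n) '' (Set.Ioo a b)) := by
      apply isPreconnected_Ioo.image
      intro x hx
      exact ((hφdiff n hnIcc x hx).continuousAt).continuousWithinAt
    have hfin : ((φ n) '' (Set.Ioo a b)).Finite := hSfin.subset himg
    intro s hs
    by_contra hne
    have h1 : φ n s ∈ (φ n) '' (Set.Ioo a b) := ⟨s, hs, rfl⟩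
    have h2 : φ n t ∈ (φ n) '' (Set.Ioo a b) := ⟨t, ht, rfl⟩
    have hoc := hconn.ordConnected
    rcases lt_or_gt_of_ne hne with hlt | hlt
    · exact ((Set.Icc_infinite hlt).mono (hoc.out h1 h2)) hfin
    · exact ((Set.Icc_infinite hlt).mono (hoc.out h2 h1)) hfin
  -- conclude
  have heq : φ n =ᶠ[nhds t] fun _ => φ n t := by
    filter_upwards [isOpen_Ioo.mem_nhds ht] with s hs using hφnconst s hs
  rw [heq.deriv_eq, deriv_const]
end

section
/- Let n ≥ 1, γ ∈ (0,1), and b ∈ ℂ with |b| = 1. Define the polynomial P(z) = z^{n+1} − conj(b) − ((1 − conj(b))·γ / (1 + (n−1)·γ)) · Σ_{j=1}^{n} z^j. Then P is paraorthogonal with respect to the measure (1−γ)·dθ/(2π) + γ·δ(θ−0) on [0,2π): for every polynomial g with deg g ≤ n and g(0) = 0, (1−γ)·(1/(2π))·∫₀^{2π} P(e^{iθ})·conj(g(e^{iθ})) dθ + γ·P(1)·conj(g(1)) = 0. -/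
open MeasureTheory Polynomial Real

lemma J_eq (m : ℤ) : (∫ θ : ℝ in Set.Ico 0 (2 * π), Complex.exp (m * θ * Complex.I)) =
    if m = 0 then (2 * π : ℂ) else 0 := by
  rw [MeasureTheory.restrict_Ico_eq_restrict_Ioc,
    ← intervalIntegral.integral_of_le (by positivity : (0:ℝ) ≤ 2 * π)]
  rcases eq_or_ne m 0 with hm | hm
  · simp [hm]
  · simp only [hm, if_neg]
    have : ∀ θ : ℝ, Complex.exp (m * θ * Complex.I) = Complex.exp ((m * Complex.I) * θ) := by
      intro θ; ring_nf
    simp only [this]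
    rw [integral_exp_mul_complex (by simp [hm, Complex.I_ne_zero])]
    have h1 : (m : ℂ) * Complex.I * ((2 * π : ℝ) : ℂ) = m * (2 * π * Complex.I) := by
      push_cast; ring
    rw [h1, Complex.exp_int_mul_two_pi_mul_I]
    simp

lemma J_int (m : ℤ) (c : ℂ) :
    IntegrableOn (fun θ : ℝ => c * Complex.exp (m * θ * Complex.I)) (Set.Ico 0 (2 * π)) := by
  rw [← integrableOn_Icc_iff_integrableOn_Ico]
  exact (Continuous.continuousOn (by fun_prop)).integrableOn_compact isCompact_Icc

lemma Jcomb (c1 c2 c3 : ℂ) (m1 m2 : ℤ) (s : Finset ℕ) (m3 : ℕ → ℤ) :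
    (∫ θ : ℝ in Set.Ico 0 (2 * π),
      (c1 * Complex.exp (m1 * θ * Complex.I) - c2 * Complex.exp (m2 * θ * Complex.I)
        - ∑ j ∈ s, c3 * Complex.exp (m3 j * θ * Complex.I)))
    = c1 * (if m1 = 0 then (2 * π : ℂ) else 0) - c2 * (if m2 = 0 then (2 * π : ℂ) else 0)
      - ∑ j ∈ s, c3 * (if m3 j = 0 then (2 * π : ℂ) else 0) := by
  rw [MeasureTheory.integral_sub, MeasureTheory.integral_sub (J_int m1 c1) (J_int m2 c2),
    MeasureTheory.integral_finset_sum _ (fun j _ => J_int (m3 j) c3)]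
  · simp only [MeasureTheory.integral_const_mul, J_eq]
  · exact (J_int m1 c1).sub (J_int m2 c2)
  · exact integrable_finset_sum _ (fun j _ => J_int (m3 j) c3)

lemma Jterm_int (c1 c2 c3 : ℂ) (m1 m2 : ℤ) (s : Finset ℕ) (m3 : ℕ → ℤ) :
    IntegrableOn (fun θ : ℝ =>
      (c1 * Complex.exp (m1 * θ * Complex.I) - c2 * Complex.exp (m2 * θ * Complex.I)
        - ∑ j ∈ s, c3 * Complex.exp (m3 j * θ * Complex.I))) (Set.Ico 0 (2 * π)) :=
  ((J_int m1 c1).sub (J_int m2 c2)).sub (integrable_finset_sum _ (fun j _ => J_int (m3 j) c3))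

/-- The polynomial `P(z) = z^{n+1} − conj(b) − ((1 − conj(b)) γ / (1 + (n−1) γ)) Σ_{j=1}^n z^j`
is paraorthogonal with respect to the measure `(1−γ) dθ/(2π) + γ δ(θ−0)` on `[0, 2π)`. -/
theorem lebesgue_plus_mass_point_popuc
    (n : ℕ) (hn : 1 ≤ n) (γ : ℝ) (hγ : γ ∈ Set.Ioo (0 : ℝ) 1)
    (b : ℂ) (hb : ‖b‖ = 1)
    (P : ℂ → ℂ)
    (hP : ∀ z, P z = z ^ (n + 1) - starRingEnd ℂ b -
      ((1 - starRingEnd ℂ b) * (γ : ℂ) / (1 + ((n : ℂ) - 1) * (γ : ℂ))) *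
        ∑ j ∈ Finset.Icc 1 n, z ^ j)
    (g : Polynomial ℂ) (hg : g.natDegree ≤ n) (hg0 : g.eval 0 = 0) :
    ((1 - γ : ℝ) : ℂ) * (1 / (2 * (π : ℂ))) *
        (∫ θ in Set.Ico 0 (2 * π),
          P (Complex.exp (θ * Complex.I)) *
            (starRingEnd ℂ) (g.eval (Complex.exp (θ * Complex.I)))) +
      (γ : ℂ) * P 1 * (starRingEnd ℂ) (g.eval 1) = 0 := by
  set A : ℂ := (1 - starRingEnd ℂ b) * (γ : ℂ) / (1 + ((n : ℂ) - 1) * (γ : ℂ)) with hA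
  set c : ℕ → ℂ := fun k => (starRingEnd ℂ) (g.coeff k) with hc
  have hcoeff0 : g.coeff 0 = 0 := by
    rw [Polynomial.coeff_zero_eq_eval_zero, hg0]
  have hc0 : c 0 = 0 := by
    show (starRingEnd ℂ) (g.coeff 0) = 0
    rw [hcoeff0, map_zero]
  set M1 : ℕ → ℤ := fun k => ((n + 1 : ℕ) : ℤ) - (k : ℤ) with hM1
  set M2 : ℕ → ℤ := fun k => -(k : ℤ) with hM2
  set M3 : ℕ → ℕ → ℤ := fun k j => (j : ℤ) - (k : ℤ) with hM3
  -- pointwise expansion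
  have key : ∀ θ : ℝ,
      P (Complex.exp (θ * Complex.I)) * (starRingEnd ℂ) (g.eval (Complex.exp (θ * Complex.I)))
      = ∑ k ∈ Finset.range (n+1),
          (c k * Complex.exp ((M1 k : ℂ) * θ * Complex.I)
            - (c k * starRingEnd ℂ b) * Complex.exp ((M2 k : ℂ) * θ * Complex.I)
            - ∑ j ∈ Finset.Icc 1 n,
                (c k * A) * Complex.exp ((M3 k j : ℂ) * θ * Complex.I)) := by
    intro θ
    set z := Complex.exp ((θ : ℂ) * Complex.I) with hzdef
    set w := Complex.exp (-((θ : ℂ) * Complex.I)) with hwdef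
    have hzw : ∀ (a k : ℕ),
        Complex.exp ((((a : ℤ) - (k : ℤ) : ℤ) : ℂ) * θ * Complex.I) = z ^ a * w ^ k := by
      intro a k
      rw [hzdef, hwdef, ← Complex.exp_nat_mul, ← Complex.exp_nat_mul, ← Complex.exp_add]
      congr 1; push_cast; ring
    have hw : ∀ k : ℕ, Complex.exp (((-(k : ℤ) : ℤ) : ℂ) * θ * Complex.I) = w ^ k := by
      intro k; rw [hwdef, ← Complex.exp_nat_mul]; congr 1; push_cast; ring
    have hconj : (starRingEnd ℂ) z = w := by
      rw [hzdef, hwdef, ← Complex.exp_conj]; congr 1; simp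
    rw [hP, Polynomial.eval_eq_sum_range' (Nat.lt_succ_of_le hg), map_sum]
    simp only [map_mul, map_pow, hconj]
    rw [Finset.mul_sum]
    refine Finset.sum_congr rfl fun k hk => ?_
    have e1 : Complex.exp ((M1 k : ℂ) * θ * Complex.I) = z ^ (n+1) * w ^ k := hzw (n+1) k
    have e2 : Complex.exp ((M2 k : ℂ) * θ * Complex.I) = w ^ k := hw k
    have e3 : (∑ j ∈ Finset.Icc 1 n, (c k * A) * Complex.exp ((M3 k j : ℂ) * θ * Complex.I))
        = c k * A * ((∑ j ∈ Finset.Icc 1 n, z ^ j) * w ^ k) := by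
      rw [Finset.sum_mul, Finset.mul_sum]
      exact Finset.sum_congr rfl fun j _ => by rw [hzw j k]
    rw [e1, e2, e3, hc]
    ring
  -- compute the integral
  have hint : (∫ θ in Set.Ico 0 (2 * π),
      P (Complex.exp (θ * Complex.I)) *
        (starRingEnd ℂ) (g.eval (Complex.exp (θ * Complex.I))))
      = ∑ k ∈ Finset.range (n+1),
          (c k * (if M1 k = 0 then (2*π:ℂ) else 0)
            - (c k * starRingEnd ℂ b) * (if M2 k = 0 then (2*π:ℂ) else 0)
            - ∑ j ∈ Finset.Icc 1 n, (c k * A) * (if M3 k j = 0 then (2*π:ℂ) else 0)) := by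
    simp only [key]
    rw [MeasureTheory.integral_finset_sum _
      (fun k _ => Jterm_int (c k) (c k * starRingEnd ℂ b) (c k * A) (M1 k) (M2 k) _ (M3 k))]
    exact Finset.sum_congr rfl fun k _ => Jcomb _ _ _ _ _ _ _
  -- evaluate the sum
  have hterm : ∀ k ∈ Finset.range (n+1),
      (c k * (if M1 k = 0 then (2*π:ℂ) else 0)
        - (c k * starRingEnd ℂ b) * (if M2 k = 0 then (2*π:ℂ) else 0)
        - ∑ j ∈ Finset.Icc 1 n, (c k * A) * (if M3 k j = 0 then (2*π:ℂ) else 0))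
      = (if k ∈ Finset.Icc 1 n then -(2*π:ℂ) * A * c k else 0) := by
    intro k hk
    simp only [Finset.mem_range] at hk
    have h1 : M1 k ≠ 0 := by simp only [hM1]; omega
    rw [if_neg h1, mul_zero, zero_sub]
    have h2 : (c k * starRingEnd ℂ b) * (if M2 k = 0 then (2*π:ℂ) else 0) = 0 := by
      rcases eq_or_ne k 0 with h | h
      · simp [h, hc0]
      · have : M2 k ≠ 0 := by simp only [hM2]; omega
        simp [this]
    rw [h2, neg_zero, zero_sub]
    have h3 : (∑ j ∈ Finset.Icc 1 n, (c k * A) * (if M3 k j = 0 then (2*π:ℂ) else 0))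
        = if k ∈ Finset.Icc 1 n then (c k * A) * (2*π:ℂ) else 0 := by
      have : ∀ j, (M3 k j = 0) = (j = k) := by
        intro j; simp only [hM3, sub_eq_zero, Int.natCast_inj]
      simp only [this, mul_ite, mul_zero]
      exact Finset.sum_ite_eq' _ _ _
    rw [h3]
    split <;> ring
  have hval : (∑ k ∈ Finset.range (n+1),
      (c k * (if M1 k = 0 then (2*π:ℂ) else 0)
        - (c k * starRingEnd ℂ b) * (if M2 k = 0 then (2*π:ℂ) else 0)
        - ∑ j ∈ Finset.Icc 1 n, (c k * A) * (if M3 k j = 0 then (2*π:ℂ) else 0)))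
      = -(2*π:ℂ) * A * ∑ k ∈ Finset.Icc 1 n, c k := by
    rw [Finset.sum_congr rfl hterm, Finset.sum_ite_mem, Finset.mul_sum]
    congr 1
    rw [Finset.inter_eq_right.mpr]
    intro k hk
    simp only [Finset.mem_Icc] at hk
    simp only [Finset.mem_range]; omega
  -- eval at 1
  have heval1 : (starRingEnd ℂ) (g.eval 1) = ∑ k ∈ Finset.Icc 1 n, c k := by
    rw [Polynomial.eval_eq_sum_range' (Nat.lt_succ_of_le hg), map_sum]
    have hins : Finset.range (n+1) = insert 0 (Finset.Icc 1 n) := by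
      ext x; simp only [Finset.mem_range, Finset.mem_insert, Finset.mem_Icc]; omega
    rw [hins, Finset.sum_insert (by simp)]
    simp [hc, hcoeff0]
  have hP1 : P 1 = 1 - starRingEnd ℂ b - A * n := by
    rw [hP 1]
    simp [Nat.card_Icc]
  have hD : (1 + ((n : ℂ) - 1) * (γ : ℂ)) ≠ 0 := by
    have hcast : (1 + ((n : ℂ) - 1) * (γ : ℂ)) = (((1 + ((n:ℝ)-1)*γ) : ℝ) : ℂ) := by
      push_cast; ring
    rw [hcast, Ne, Complex.ofReal_eq_zero]
    have hn' : (1:ℝ) ≤ (n:ℝ) := by exact_mod_cast hn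
    nlinarith [hγ.1, hγ.2]
  have hπ : ((π : ℂ)) ≠ 0 := Complex.ofReal_ne_zero.mpr Real.pi_ne_zero
  have hD' : (1 - (γ:ℂ) + γ * n) ≠ 0 := by convert hD using 1; ring
  rw [hint, hval, hP1, heval1, hA]
  push_cast
  field_simp
  have hinv : (1 - (γ:ℂ) + γ * n) * (1 - (γ:ℂ) + γ * n)⁻¹ = 1 := mul_inv_cancel₀ hD'
  linear_combination (-((γ:ℂ) * (1 - starRingEnd ℂ b) * ∑ k ∈ Finset.Icc 1 n, c k)) * hinv
end
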